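/- Let n ≥ 1, x : Fin n → ℝ, y : ℝ, and let x' : Fin (n+1) → ℝ be the family obtained by appending y to x. Then for every k with 2 ≤ k ≤ n, one has max(min(rank_{k-1}(x), y), rank_k(x)) = rank_k(x'); that is, (x^{(k-1)} ∧ y) ∨ x^{(k)} equals the k-th largest value among x 1, …, x n, y. -/

import Mathlib

/-- The k-th rank (reverse order statistic): the maximum over all k-element
subsets `S` of `Fin n` of the minimum of `x` over `S`. -/
noncomputable def rankProc {n : ℕ} (x : Fin n → ℝ) (k : ℕ) : ℝ :=
  sSup { r : ℝ | ∃ S : Finset (Fin n), S.card = k ∧ ∃ hS : S.Nonempty, r = S.inf' hS x }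

lemma rank_isGreatest {n k : ℕ} (hk1 : 1 ≤ k) (hkn : k ≤ n) (x : Fin n → ℝ) :
    IsGreatest { r : ℝ | ∃ S : Finset (Fin n), S.card = k ∧ ∃ hS : S.Nonempty,
      r = S.inf' hS x } (rankProc x k) := by
  set A := { r : ℝ | ∃ S : Finset (Fin n), S.card = k ∧ ∃ hS : S.Nonempty,
      r = S.inf' hS x } with hA
  have hfin : A.Finite := by
    apply Set.Finite.subset (Set.finite_range
      (fun S : Finset (Fin n) => if h : S.Nonempty then S.inf' h x else 0))
    rintro r ⟨S, _, hS, rfl⟩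
    exact ⟨S, by simp [hS]⟩
  have hne : A.Nonempty := by
    obtain ⟨S, -, hScard⟩ := Finset.exists_subset_card_eq
      (s := (Finset.univ : Finset (Fin n))) (by simpa using hkn)
    have hS : S.Nonempty := Finset.card_pos.mp (by omega)
    exact ⟨S.inf' hS x, S, hScard, hS, rfl⟩
  exact ⟨hne.csSup_mem hfin, fun r hr => le_csSup hfin.bddAbove hr⟩

lemma inf'_congr_set {α β} [SemilatticeInf β] {s t : Finset α} (h : s = t)
    (hs : s.Nonempty) (ht : t.Nonempty) (f : α → β) : s.inf' hs f = t.inf' ht f := by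
  subst h; rfl

lemma inf'_map_snoc {n : ℕ} (x : Fin n → ℝ) (y : ℝ) (T : Finset (Fin n))
    (hT : T.Nonempty) (hT' : (T.map Fin.castSuccEmb).Nonempty) :
    (T.map Fin.castSuccEmb).inf' hT' (Fin.snoc x y) = T.inf' hT x := by
  rw [Finset.inf'_map]
  exact Finset.inf'_congr _ rfl (fun i _ => by simp)

/-- (x^{(k-1)} ∧ y) ∨ x^{(k)} is the k-th rank of the family extended by y. -/
theorem rank_snoc (n : ℕ) (hn : 1 ≤ n) (x : Fin n → ℝ) (y : ℝ) (k : ℕ)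
    (hk : 2 ≤ k) (hkn : k ≤ n) :
    max (min (rankProc x (k - 1)) y) (rankProc x k)
      = rankProc (Fin.snoc x y : Fin (n + 1) → ℝ) k := by
  have hG1 := rank_isGreatest (k := k - 1) (by omega) (by omega) x
  have hGk := rank_isGreatest (k := k) (by omega) hkn x
  have hG' := rank_isGreatest (k := k) (by omega) (by omega) (Fin.snoc x y : Fin (n + 1) → ℝ)
  apply le_antisymm
  · apply max_le
    · -- min (rank (k-1)) y ≤ rank x' k
      obtain ⟨⟨S, hScard, hSne, hr⟩, -⟩ := hG1
      have hlast : Fin.last n ∉ S.map Fin.castSuccEmb := by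
        simp only [Finset.mem_map]
        rintro ⟨j, -, hj⟩
        exact absurd hj (Fin.castSucc_lt_last j).ne
      set S' : Finset (Fin (n + 1)) := insert (Fin.last n) (S.map Fin.castSuccEmb) with hS'
      have hS'ne : S'.Nonempty := Finset.insert_nonempty _ _
      have hS'card : S'.card = k := by
        rw [hS', Finset.card_insert_of_notMem hlast, Finset.card_map, hScard]; omega
      have hmapne : (S.map Fin.castSuccEmb).Nonempty := hSne.map
      have hval : S'.inf' hS'ne (Fin.snoc x y) = min y (S.inf' hSne x) := by
        rw [inf'_congr_set hS' hS'ne (Finset.insert_nonempty _ _), Finset.inf'_insert (H := hmapne), inf'_map_snoc x y S hSne hmapne, Fin.snoc_last]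
      have := hG'.2 ⟨S', hS'card, hS'ne, rfl⟩
      rw [hval, hr] at *
      calc min (S.inf' hSne x) y = min y (S.inf' hSne x) := min_comm _ _
        _ ≤ _ := this
    · -- rank x k ≤ rank x' k
      obtain ⟨⟨S, hScard, hSne, hr⟩, -⟩ := hGk
      have hmapne : (S.map Fin.castSuccEmb).Nonempty := hSne.map
      have := hG'.2 (Set.mem_setOf.mpr (⟨S.map Fin.castSuccEmb,
        by rw [Finset.card_map, hScard], hmapne, rfl⟩ :
        ∃ S' : Finset (Fin (n+1)), S'.card = k ∧ ∃ hS' : S'.Nonempty,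
          (S.map Fin.castSuccEmb).inf' hmapne (Fin.snoc x y) = S'.inf' hS' (Fin.snoc x y)))
      rwa [inf'_map_snoc x y S hSne hmapne, ← hr] at this
  · -- rank x' k ≤ max ...
    obtain ⟨⟨S, hScard, hSne, hr⟩, hub⟩ := hG'
    rw [hr]
    by_cases hlast : Fin.last n ∈ S
    · -- decompose S = insert last S'
      set S' : Finset (Fin (n + 1)) := S.erase (Fin.last n) with hS'def
      have hS'card : S'.card = k - 1 := by
        rw [hS'def, Finset.card_erase_of_mem hlast, hScard]
      have hS'ne : S'.Nonempty := Finset.card_pos.mp (by omega)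
      set T : Finset (Fin n) := S'.preimage Fin.castSucc
        (Fin.castSucc_injective n).injOn with hTdef
      have hTeq : T.map Fin.castSuccEmb = S' := by
        ext a
        simp only [Finset.mem_map, hTdef, Finset.mem_preimage]
        constructor
        · rintro ⟨j, hj, rfl⟩; exact hj
        · intro ha
          have hane : a ≠ Fin.last n := by
            rintro rfl; exact (Finset.notMem_erase _ _) ha
          obtain ⟨j, rfl⟩ := Fin.eq_castSucc_of_ne_last hane
          exact ⟨j, ha, rfl⟩
      have hTcard : T.card = k - 1 := by
        rw [← hS'card, ← hTeq, Finset.card_map]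
      have hTne : T.Nonempty := Finset.card_pos.mp (by omega)
      have hSeq : S = insert (Fin.last n) S' := by
        rw [hS'def, Finset.insert_erase hlast]
      have hval : S.inf' hSne (Fin.snoc x y) = min y (T.inf' hTne x) := by
        rw [inf'_congr_set hSeq hSne (Finset.insert_nonempty _ _), Finset.inf'_insert (H := hS'ne),
          inf'_congr_set hTeq.symm hS'ne (hTne.map),
          inf'_map_snoc x y T hTne (hTne.map), Fin.snoc_last]
      rw [hval]
      have h1 : T.inf' hTne x ≤ rankProc x (k - 1) :=
        hG1.2 (Set.mem_setOf.mpr ⟨T, hTcard, hTne, rfl⟩)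
      exact le_max_of_le_left (le_trans (min_le_min le_rfl h1) (min_comm _ _).le)
    · set T : Finset (Fin n) := S.preimage Fin.castSucc
        (Fin.castSucc_injective n).injOn with hTdef
      have hTeq : T.map Fin.castSuccEmb = S := by
        ext a
        simp only [Finset.mem_map, hTdef, Finset.mem_preimage]
        constructor
        · rintro ⟨j, hj, rfl⟩; exact hj
        · intro ha
          have hane : a ≠ Fin.last n := by rintro rfl; exact hlast ha
          obtain ⟨j, rfl⟩ := Fin.eq_castSucc_of_ne_last hane
          exact ⟨j, ha, rfl⟩
      have hTcard : T.card = k := by rw [← hScard, ← hTeq, Finset.card_map]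
      have hTne : T.Nonempty := Finset.card_pos.mp (by omega)
      have hval : S.inf' hSne (Fin.snoc x y) = T.inf' hTne x := by
        rw [inf'_congr_set hTeq.symm hSne (hTne.map), inf'_map_snoc x y T hTne (hTne.map)]
      rw [hval]
      exact le_max_of_le_right (hGk.2 (Set.mem_setOf.mpr ⟨T, hTcard, hTne, rfl⟩))
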